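/- Let m ≥ 2 and let V_1,...,V_m be i.i.d. ER random variables. For each k ∈ [m], posting price (log m)/(2k) to a bidder with average value (1/m)Σ_i V_i/k is accepted with probability at least 1/2, and hence the item-type partition mechanism that posts price (log m)/(2k) when the item is in group k obtains total expected revenue at least (1/m)·Σ_{k=1}^m (log m)/(4k) ≥ (log m · log m)/(4m) (up to constants Ω(log²n/√n) with n = m²). -/

import Mathlib

open MeasureTheory Set

/-- Layer-cake computation for a random variable with values in `[1, B]` whose upper tail
on `[1, B)` is `t ^ r`. -/
lemma tail_integral {Ω : Type*} [MeasurableSpace Ω] (μ : Measure Ω) [IsProbabilityMeasure μ]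
    {g : Ω → ℝ} (hg : Measurable g) {B : ℝ} (hB : 1 ≤ B)
    (h1 : ∀ ω, 1 ≤ g ω) (h2 : ∀ ω, g ω ≤ B) (r : ℝ)
    (hr : ∀ t : ℝ, 1 ≤ t → t < B → (μ {ω | t < g ω}).toReal = t ^ r) :
    ∫ ω, g ω ∂μ = 1 + ∫ t in (1:ℝ)..B, t ^ r := by
  have hB0 : (0:ℝ) < B := lt_of_lt_of_le one_pos hB
  set h : ℝ → ℝ := fun t => (μ {ω | t < g ω}).toReal with hh
  have h_anti : Antitone h := by
    intro s t hst
    exact ENNReal.toReal_mono (measure_ne_top _ _)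
      (measure_mono fun ω hω => lt_of_le_of_lt hst hω)
  have h_meas : Measurable h := h_anti.measurable
  have h_bdd : ∀ t, |h t| ≤ 1 := by
    intro t
    rw [abs_of_nonneg ENNReal.toReal_nonneg]
    exact ENNReal.toReal_le_of_le_ofReal one_pos.le (by simpa using prob_le_one)
  have h_one : ∀ t : ℝ, t < 1 → h t = 1 := by
    intro t ht
    have : {ω | t < g ω} = Set.univ := by
      ext ω; simp only [mem_setOf_eq, mem_univ, iff_true]
      exact lt_of_lt_of_le ht (h1 ω)
    simp [hh, this]
  have h_zero : ∀ t : ℝ, B ≤ t → h t = 0 := by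
    intro t ht
    have : {ω | t < g ω} = (∅ : Set Ω) := by
      ext ω; simp only [mem_setOf_eq, mem_empty_iff_false, iff_false, not_lt]
      exact le_trans (h2 ω) ht
    simp [hh, this]
  have hg_int : Integrable g μ := by
    refine (integrable_const B).mono' hg.aestronglyMeasurable ?_
    filter_upwards with ω
    rw [Real.norm_eq_abs, abs_of_nonneg (le_trans zero_le_one (h1 ω))]
    exact h2 ω
  have key := hg_int.integral_eq_integral_meas_lt
    (Filter.Eventually.of_forall fun ω => le_trans zero_le_one (h1 ω))
  rw [key]
  change ∫ t in Set.Ioi 0, h t = _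
  have hIntOn : ∀ s : Set ℝ, MeasurableSet s → volume s < ⊤ → IntegrableOn h s := by
    intro s hs hvol
    refine (integrableOn_const (C:=(1:ℝ)) hvol.ne).mono' (h_meas.aestronglyMeasurable.restrict) ?_
    filter_upwards with t using h_bdd t
  have hsplit1 : Set.Ioi (0:ℝ) = Set.Ioc 0 B ∪ Set.Ioi B := (Set.Ioc_union_Ioi_eq_Ioi hB0.le).symm
  have hIntIoi : IntegrableOn h (Set.Ioi B) := by
    apply Integrable.congr (integrable_zero _ _ _)
    filter_upwards [ae_restrict_mem measurableSet_Ioi] with t ht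
    exact (h_zero t (le_of_lt ht)).symm
  rw [hsplit1, setIntegral_union (Set.Ioc_disjoint_Ioi le_rfl) measurableSet_Ioi
    (hIntOn _ measurableSet_Ioc measure_Ioc_lt_top) hIntIoi]
  have hIoi0 : ∫ t in Set.Ioi B, h t = 0 := by
    rw [setIntegral_congr_ae measurableSet_Ioi
      (Filter.Eventually.of_forall fun t ht => h_zero t (le_of_lt ht))]
    simp
  rw [hIoi0, add_zero]
  have hsplit2 : Set.Ioc (0:ℝ) B = Set.Ioc 0 1 ∪ Set.Ioc 1 B := (Set.Ioc_union_Ioc_eq_Ioc one_pos.le hB).symm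
  rw [hsplit2, setIntegral_union (Set.Ioc_disjoint_Ioc.mpr ((min_le_left _ _).trans (le_max_right _ _))) measurableSet_Ioc
    (hIntOn _ measurableSet_Ioc measure_Ioc_lt_top) (hIntOn _ measurableSet_Ioc measure_Ioc_lt_top)]
  have hpart1 : ∫ t in Set.Ioc (0:ℝ) 1, h t = 1 := by
    have : ∀ᵐ t : ℝ, t ∈ Set.Ioc (0:ℝ) 1 → h t = 1 := by
      have hnull : (volume : Measure ℝ) {(1:ℝ)} = 0 := Real.volume_singleton
      filter_upwards [measure_eq_zero_iff_ae_notMem.mp hnull] with t ht hti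
      rcases lt_or_eq_of_le hti.2 with h' | h'
      · exact h_one t h'
      · exact absurd (by simp [h']) ht
    rw [setIntegral_congr_ae measurableSet_Ioc this]
    simp
  have hpart2 : ∫ t in Set.Ioc (1:ℝ) B, h t = ∫ t in (1:ℝ)..B, t ^ r := by
    rw [intervalIntegral.integral_of_le hB]
    apply setIntegral_congr_ae measurableSet_Ioc
    have hnull : (volume : Measure ℝ) {B} = 0 := Real.volume_singleton
    filter_upwards [measure_eq_zero_iff_ae_notMem.mp hnull] with t ht hti
    rcases lt_or_eq_of_le hti.2 with h' | h'
    · exact hr t hti.1.le h'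
    · exact absurd (by simp [h']) ht
  rw [hpart1, hpart2]

open scoped ProbabilityTheory

/-- The key concentration estimate. -/
lemma key_prob {Ω : Type*} [MeasurableSpace Ω] (μ : Measure Ω) [IsProbabilityMeasure μ]
    (m : ℕ) (hm : 2 ≤ m) (V : Fin m → Ω → ℝ)
    (hmeas : ∀ i, Measurable (V i))
    (hindep : ProbabilityTheory.iIndepFun V μ)
    (hsupp : ∀ i, ∀ᵐ ω ∂μ, 1 ≤ V i ω)
    (hcdf : ∀ i, ∀ x : ℝ, 1 ≤ x → (μ {ω | V i ω ≤ x}).toReal = 1 - 1 / x) :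
    (1:ℝ)/2 ≤ (μ {ω | (m:ℝ) * Real.log m / 2 ≤ ∑ i, V i ω}).toReal := by
  have hm1 : (1:ℝ) ≤ m := by exact_mod_cast Nat.one_le_of_lt hm
  have hm1' : (1:ℝ) < m := by exact_mod_cast hm
  have hm0 : (0:ℝ) < m := by linarith
  set L := Real.log m with hLdef
  have hL : 0 < L := Real.log_pos hm1'
  have hSmeas : Measurable fun ω => ∑ i, V i ω :=
    Finset.measurable_sum _ fun i _ => hmeas i
  have hA : MeasurableSet {ω | (m:ℝ) * L / 2 ≤ ∑ i, V i ω} :=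
    measurableSet_le measurable_const hSmeas
  -- tail of V
  have tailV : ∀ i, ∀ t : ℝ, 1 ≤ t → (μ {ω | t < V i ω}).toReal = 1 / t := by
    intro i t ht
    have hc : {ω | t < V i ω} = {ω | V i ω ≤ t}ᶜ := by
      ext ω; simp [not_le]
    have hms : MeasurableSet {ω | V i ω ≤ t} := measurableSet_le (hmeas i) measurable_const
    rw [hc, measure_compl hms (measure_ne_top _ _), measure_univ,
      ENNReal.toReal_sub_of_le prob_le_one ENNReal.one_ne_top, ENNReal.toReal_one,
      hcdf i t ht]
    ring
  by_cases hLle : L ≤ 2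
  · -- almost surely the sum is at least `m ≥ m L / 2`
    have hae : ∀ᵐ ω ∂μ, (m:ℝ) * L / 2 ≤ ∑ i, V i ω := by
      filter_upwards [ae_all_iff.2 hsupp] with ω hω
      have h1 : (m:ℝ) = ∑ _i : Fin m, (1:ℝ) := by
        simp [Finset.card_univ]
      have h2 : ∑ _i : Fin m, (1:ℝ) ≤ ∑ i, V i ω := Finset.sum_le_sum fun i _ => hω i
      nlinarith
    have h0 : μ {ω | (m:ℝ) * L / 2 ≤ ∑ i, V i ω}ᶜ = 0 := by
      rw [Set.compl_setOf]
      exact ae_iff.mp hae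
    have h1 : μ {ω | (m:ℝ) * L / 2 ≤ ∑ i, V i ω} = 1 := by
      have h2 := measure_add_measure_compl (μ := μ) hA
      rw [h0, add_zero, measure_univ] at h2
      exact h2
    rw [h1]; norm_num
  · push_neg at hLle
    -- truncated variables
    set W : Fin m → Ω → ℝ := fun i ω => min (max (V i ω) 1) m with hWdef
    have hWmeas : ∀ i, Measurable (W i) :=
      fun i => ((hmeas i).max measurable_const).min measurable_const
    have hW1 : ∀ i ω, 1 ≤ W i ω := fun i ω => le_min (le_max_right _ _) hm1
    have hWm : ∀ i ω, W i ω ≤ m := fun i ω => min_le_right _ _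
    have hWV : ∀ i, ∀ᵐ ω ∂μ, W i ω ≤ V i ω := by
      intro i
      filter_upwards [hsupp i] with ω hω
      calc W i ω ≤ max (V i ω) 1 := min_le_left _ _
        _ = V i ω := max_eq_left hω
    have hWmem : ∀ i, MemLp (W i) 2 μ := fun i =>
      memLp_of_bounded (Filter.Eventually.of_forall fun ω => ⟨hW1 i ω, hWm i ω⟩)
        (hWmeas i).aestronglyMeasurable 2
    -- tail of W
    have tailW : ∀ i, ∀ t : ℝ, 1 ≤ t → t < m → (μ {ω | t < W i ω}).toReal = 1 / t := by
      intro i t ht htm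
      have hset : {ω | t < W i ω} = {ω | t < V i ω} := by
        ext ω
        simp only [mem_setOf_eq, hWdef, lt_min_iff, lt_max_iff]
        constructor
        · rintro ⟨h | h, _⟩
          · exact h
          · linarith
        · exact fun h => ⟨Or.inl h, htm⟩
      rw [hset, tailV i t ht]
    -- first moment
    have EW : ∀ i, ∫ ω, W i ω ∂μ = 1 + L := by
      intro i
      have h1 := tail_integral μ (hWmeas i) hm1 (hW1 i) (hWm i) (-1 : ℝ)
        (fun t ht htm => by rw [tailW i t ht htm, Real.rpow_neg_one, one_div])
      rw [h1]
      have h2 : ∫ t in (1:ℝ)..(m:ℝ), t ^ (-1:ℝ) = L := by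
        simp_rw [Real.rpow_neg_one]
        rw [integral_inv_of_pos one_pos hm0, div_one]
      rw [h2]
    -- second moment
    have EW2 : ∀ i, ∫ ω, (W i ω) ^ 2 ∂μ = 2 * m - 1 := by
      intro i
      have hsqmeas : Measurable fun ω => (W i ω) ^ 2 := (hWmeas i).pow_const 2
      have hsq1 : ∀ ω, 1 ≤ (W i ω) ^ 2 := fun ω => one_le_pow₀ (hW1 i ω)
      have hsqm : ∀ ω, (W i ω) ^ 2 ≤ (m:ℝ) ^ 2 := fun ω =>
        pow_le_pow_left₀ (le_trans zero_le_one (hW1 i ω)) (hWm i ω) 2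
      have hm2 : (1:ℝ) ≤ (m:ℝ) ^ 2 := one_le_pow₀ hm1
      have htail2 : ∀ t : ℝ, 1 ≤ t → t < (m:ℝ) ^ 2 →
          (μ {ω | t < (W i ω) ^ 2}).toReal = t ^ (-(1/2) : ℝ) := by
        intro t ht htm
        have ht0 : (0:ℝ) ≤ t := le_trans zero_le_one ht
        have hst1 : 1 ≤ Real.sqrt t := by
          rw [show (1:ℝ) = Real.sqrt 1 by rw [Real.sqrt_one]]
          exact Real.sqrt_le_sqrt ht
        have hstm : Real.sqrt t < m := (Real.sqrt_lt' hm0).mpr htm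
        have hset : {ω | t < (W i ω) ^ 2} = {ω | Real.sqrt t < W i ω} := by
          ext ω
          simp only [mem_setOf_eq]
          exact ((Real.sqrt_lt' (lt_of_lt_of_le zero_lt_one (hW1 i ω))).symm)
        rw [hset, tailW i _ hst1 hstm, Real.sqrt_eq_rpow, one_div,
          ← Real.rpow_neg ht0]
      have h1 := tail_integral μ hsqmeas hm2 hsq1 hsqm (-(1/2) : ℝ) htail2
      rw [h1]
      have h2 : ∫ t in (1:ℝ)..((m:ℝ)^2), t ^ (-(1/2) : ℝ) = 2 * m - 2 := by
        rw [integral_rpow (Or.inr ⟨by norm_num, by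
          rw [Set.uIcc_of_le (by nlinarith : (1:ℝ) ≤ (m:ℝ)^2)]
          rintro ⟨h0, -⟩
          linarith⟩)]
        have e1 : ((m:ℝ)^2) ^ ((-(1/2):ℝ) + 1) = m := by
          rw [show ((m:ℝ)^2 : ℝ) = (m:ℝ) ^ (2:ℝ) by
            rw [← Real.rpow_natCast (m:ℝ) 2]; norm_num]
          rw [← Real.rpow_mul hm0.le]
          norm_num
        rw [e1, Real.one_rpow]
        ring
      rw [h2]
      ring
    -- variance bound
    have VarW : ∀ i, ProbabilityTheory.variance (W i) μ ≤ 2 * m - 1 := by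
      intro i
      have h1 := ProbabilityTheory.variance_le_expectation_sq (μ := μ)
        (hWmeas i).aestronglyMeasurable
      calc ProbabilityTheory.variance (W i) μ ≤ ∫ x, ((W i) ^ 2) x ∂μ := h1
        _ = ∫ ω, (W i ω) ^ 2 ∂μ := by simp [Pi.pow_apply]
        _ = 2 * m - 1 := EW2 i
    -- independence of truncations
    have hWindep : Set.Pairwise ↑(Finset.univ : Finset (Fin m))
        fun i j => ProbabilityTheory.IndepFun (W i) (W j) μ := by
      intro i _ j _ hij
      have hφ : Measurable fun x : ℝ => min (max x 1) (m:ℝ) :=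
        (measurable_id.max measurable_const).min measurable_const
      exact (hindep.indepFun hij).comp hφ hφ
    -- sum
    have hTmem : MemLp (∑ i, W i) 2 μ := memLp_finset_sum' _ fun i _ => hWmem i
    have VarT : ProbabilityTheory.variance (∑ i, W i) μ ≤ 2 * m ^ 2 := by
      rw [ProbabilityTheory.IndepFun.variance_sum (fun i _ => hWmem i) hWindep]
      calc ∑ i, ProbabilityTheory.variance (W i) μ ≤ ∑ _i : Fin m, (2 * (m:ℝ) - 1) :=
            Finset.sum_le_sum fun i _ => VarW i
        _ = m * (2 * m - 1) := by simp [Finset.card_univ, mul_comm]; ring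
        _ ≤ 2 * m ^ 2 := by nlinarith
    have ET : ∫ x, (∑ i, W i) x ∂μ = (m:ℝ) * (1 + L) := by
      have h1 : ∫ x, (∑ i, W i) x ∂μ = ∑ i, ∫ ω, W i ω ∂μ := by
        rw [show (∑ i, W i) = fun ω => ∑ i, W i ω from funext fun ω => Finset.sum_apply ω _ _]
        exact integral_finset_sum _ fun i _ => (hWmem i).integrable one_le_two
      rw [h1]
      simp only [EW]
      rw [Finset.sum_const, Finset.card_univ, Fintype.card_fin, nsmul_eq_mul]
    -- Chebyshev
    set c : ℝ := m * (1 + L / 2) with hcdef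
    have hc : 0 < c := by positivity
    have cheb := ProbabilityTheory.meas_ge_le_variance_div_sq (μ := μ) hTmem hc
    have hhalf : ProbabilityTheory.variance (∑ i, W i) μ / c ^ 2 ≤ 1 / 2 := by
      rw [div_le_iff₀ (by positivity)]
      have h2c : 2 * (m:ℝ) ≤ c := by
        rw [hcdef]; nlinarith
      nlinarith [VarT]
    have cheb2 : μ {ω | c ≤ |(∑ i, W i) ω - ∫ x, (∑ i, W i) x ∂μ|} ≤ ENNReal.ofReal (1/2) :=
      le_trans cheb (ENNReal.ofReal_le_ofReal hhalf)
    -- the bad event is contained in the Chebyshev event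
    have hsub : μ {ω | (m:ℝ) * L / 2 ≤ ∑ i, V i ω}ᶜ ≤
        μ {ω | c ≤ |(∑ i, W i) ω - ∫ x, (∑ i, W i) x ∂μ|} := by
      apply measure_mono_ae
      filter_upwards [ae_all_iff.2 hWV] with ω hω hmem
      have hmem' : ¬ ((m:ℝ) * L / 2 ≤ ∑ i, V i ω) := hmem
      push_neg at hmem'
      have hTω : (∑ i, W i) ω = ∑ i, W i ω := Finset.sum_apply ω _ _
      have hTle : (∑ i, W i) ω ≤ ∑ i, V i ω := by
        rw [hTω]; exact Finset.sum_le_sum fun i _ => hω i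
      show c ≤ |(∑ i, W i) ω - ∫ x, (∑ i, W i) x ∂μ|
      rw [ET]
      have : c ≤ (m:ℝ) * (1 + L) - (∑ i, W i) ω := by
        rw [hcdef]; nlinarith [hmem']
      calc c ≤ -((∑ i, W i) ω - m * (1 + L)) := by linarith
        _ ≤ |(∑ i, W i) ω - m * (1 + L)| := neg_le_abs _
    have hfin : μ {ω | (m:ℝ) * L / 2 ≤ ∑ i, V i ω}ᶜ ≤ ENNReal.ofReal (1/2) :=
      le_trans hsub cheb2
    have hsum := measure_add_measure_compl (μ := μ) hA
    rw [measure_univ] at hsum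
    have ha := congrArg ENNReal.toReal hsum
    rw [ENNReal.toReal_add (measure_ne_top _ _) (measure_ne_top _ _), ENNReal.toReal_one] at ha
    have hb : (μ {ω | (m:ℝ) * L / 2 ≤ ∑ i, V i ω}ᶜ).toReal ≤ 1 / 2 :=
      ENNReal.toReal_le_of_le_ofReal (by norm_num) hfin
    linarith


/-- Claim 3 (item-type partitioning in Example 1): with `m ≥ 2` i.i.d. equal-revenue
variables, posting price `(log m)/(2k)` to a bidder with average value `(1/m) Σ_i V_i/k`
is accepted with probability at least `1/2` for each group `k`, and the item-type
partition mechanism posting these prices obtains total expected revenue at least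
`(log m)²/(4m)`. -/
theorem item_type_partition_revenue
    {Ω : Type*} [MeasurableSpace Ω] (μ : Measure Ω) [IsProbabilityMeasure μ]
    (m : ℕ) (hm : 2 ≤ m) (V : Fin m → Ω → ℝ)
    (hmeas : ∀ i, Measurable (V i))
    (hindep : ProbabilityTheory.iIndepFun V μ)
    (hsupp : ∀ i, ∀ᵐ ω ∂μ, 1 ≤ V i ω)
    (hcdf : ∀ i, ∀ x : ℝ, 1 ≤ x → (μ {ω | V i ω ≤ x}).toReal = 1 - 1 / x) :
    (∀ k ∈ Finset.Icc 1 m,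
        (1 : ℝ) / 2 ≤
          (μ {ω | Real.log m / (2 * (k : ℝ)) ≤
              (1 / (m : ℝ)) * ∑ i, V i ω / (k : ℝ)}).toReal) ∧
    (Real.log m) ^ 2 / (4 * (m : ℝ)) ≤
      (1 / (m : ℝ)) * ∑ k ∈ Finset.Icc 1 m,
        (Real.log m / (2 * (k : ℝ))) *
          (μ {ω | Real.log m / (2 * (k : ℝ)) ≤
              (1 / (m : ℝ)) * ∑ i, V i ω / (k : ℝ)}).toReal := by
  
  have hm1' : (1:ℝ) < m := by exact_mod_cast hm
  have hm0 : (0:ℝ) < m := by linarith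
  set L := Real.log m with hLdef
  have hL : 0 < L := Real.log_pos hm1'
  -- all the events coincide with the concentration event
  have hset : ∀ k ∈ Finset.Icc 1 m,
      {ω | L / (2 * (k : ℝ)) ≤ (1 / (m : ℝ)) * ∑ i, V i ω / (k : ℝ)}
        = {ω | (m:ℝ) * L / 2 ≤ ∑ i, V i ω} := by
    intro k hk
    rw [Finset.mem_Icc] at hk
    have hk0 : (0:ℝ) < k := by exact_mod_cast hk.1
    ext ω
    simp only [Set.mem_setOf_eq]
    rw [← Finset.sum_div, show (1:ℝ) / m * ((∑ i, V i ω) / k) = (∑ i, V i ω) / (m * k) by ring,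
      div_le_div_iff₀ (by positivity) (by positivity), div_le_iff₀ (by norm_num : (0:ℝ) < 2)]
    constructor <;> intro h <;> nlinarith [hk0]
  have hkey := key_prob μ m hm V hmeas hindep hsupp hcdf
  have part1 : ∀ k ∈ Finset.Icc 1 m,
      (1 : ℝ) / 2 ≤
        (μ {ω | L / (2 * (k : ℝ)) ≤ (1 / (m : ℝ)) * ∑ i, V i ω / (k : ℝ)}).toReal := by
    intro k hk
    rw [hset k hk]
    exact hkey
  refine ⟨part1, ?_⟩
  -- part 2 : the revenue bound
  have hterm : ∀ k ∈ Finset.Icc 1 m,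
      L / (2 * (k:ℝ)) * (1/2) ≤
        L / (2 * (k : ℝ)) *
          (μ {ω | L / (2 * (k : ℝ)) ≤ (1 / (m : ℝ)) * ∑ i, V i ω / (k : ℝ)}).toReal := by
    intro k hk
    rw [Finset.mem_Icc] at hk
    have hk0 : (0:ℝ) < k := by exact_mod_cast hk.1
    have hpos : 0 ≤ L / (2 * (k:ℝ)) := by positivity
    exact mul_le_mul_of_nonneg_left (part1 k (by rw [Finset.mem_Icc]; exact hk)) hpos
  have hsum1 : ∑ k ∈ Finset.Icc 1 m, L / (2 * (k:ℝ)) * (1/2) ≤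
      ∑ k ∈ Finset.Icc 1 m,
        L / (2 * (k : ℝ)) *
          (μ {ω | L / (2 * (k : ℝ)) ≤ (1 / (m : ℝ)) * ∑ i, V i ω / (k : ℝ)}).toReal :=
    Finset.sum_le_sum hterm
  -- harmonic sum lower bound
  have hharm : L ≤ ∑ k ∈ Finset.Icc 1 m, ((k:ℝ))⁻¹ := by
    have h1 := log_add_one_le_harmonic m
    have h2 : ((harmonic m : ℚ) : ℝ) = ∑ k ∈ Finset.Icc 1 m, ((k:ℝ))⁻¹ := by
      rw [harmonic_eq_sum_Icc]
      push_cast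
      rfl
    have h3 : L ≤ Real.log (↑(m + 1)) := by
      apply Real.log_le_log hm0
      push_cast; linarith
    rw [h2] at h1
    linarith
  have hsum2 : L / 4 * L ≤ ∑ k ∈ Finset.Icc 1 m, L / (2 * (k:ℝ)) * (1/2) := by
    have e1 : ∑ k ∈ Finset.Icc 1 m, L / (2 * (k:ℝ)) * (1/2)
        = L / 4 * ∑ k ∈ Finset.Icc 1 m, ((k:ℝ))⁻¹ := by
      rw [Finset.mul_sum]
      apply Finset.sum_congr rfl
      intro k _
      ring
    rw [e1]
    exact mul_le_mul_of_nonneg_left hharm (by positivity)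
  calc L ^ 2 / (4 * (m:ℝ)) = (1 / (m:ℝ)) * (L / 4 * L) := by ring
    _ ≤ (1 / (m:ℝ)) * ∑ k ∈ Finset.Icc 1 m,
        L / (2 * (k : ℝ)) *
          (μ {ω | L / (2 * (k : ℝ)) ≤ (1 / (m : ℝ)) * ∑ i, V i ω / (k : ℝ)}).toReal := by
      apply mul_le_mul_of_nonneg_left (le_trans hsum2 hsum1) (by positivity)
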